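/- arXiv:1905.01650 — 2 statements merged into one kernel-verified Lean document; each statement's English description precedes it below -/
import Mathlib

section
/- Every 2×2 complex matrix A with determinant 1 and trace -2 is a product of two exponentials of trace-zero matrices: there exist 2×2 matrices B, C with tr(B) = tr(C) = 0 and A = exp(B)·exp(C). -/
attribute [local instance] Matrix.linftyOpNormedRing Matrix.linftyOpNormedAlgebra

theorem trace_neg_two_two_exponentials (A : Matrix (Fin 2) (Fin 2) ℂ)
    (hdet : A.det = 1) (htr : A.trace = -2) :
    ∃ B C : Matrix (Fin 2) (Fin 2) ℂ, B.trace = 0 ∧ C.trace = 0 ∧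
      A = NormedSpace.exp B * NormedSpace.exp C := by
  rw [Matrix.det_fin_two] at hdet
  rw [Matrix.trace_fin_two] at htr
  set N : Matrix (Fin 2) (Fin 2) ℂ := -A - 1 with hN
  have hN2 : N ^ 2 = 0 := by
    ext i j
    fin_cases i <;> fin_cases j <;>
      simp [hN, pow_two, Matrix.mul_apply, Fin.sum_univ_two, Matrix.one_apply] <;>
      ring_nf
    · linear_combination (A 0 0) * htr - hdet
    · linear_combination (A 0 1) * htr
    · linear_combination (A 1 0) * htr
    · linear_combination (A 1 1) * htr - hdet
  have hexpN : NormedSpace.exp N = 1 + N := by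
    simp only [NormedSpace.exp_eq_tsum ℂ]
    rw [tsum_eq_sum (s := Finset.range 2)]
    · simp [Finset.sum_range_succ]
    · intro n hn
      have h2 : 2 ≤ n := by
        by_contra h
        exact hn (Finset.mem_range.mpr (not_le.mp h))
      rw [pow_eq_zero_of_le h2 hN2, smul_zero]
  set D : Matrix (Fin 2) (Fin 2) ℂ :=
    Matrix.diagonal ![Real.pi * Complex.I, -(Real.pi * Complex.I)] with hD
  have hexpD : NormedSpace.exp D = -1 := by
    rw [hD, Matrix.exp_diagonal, Pi.exp_def]
    have : (fun i => NormedSpace.exp (![(Real.pi : ℂ) * Complex.I,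
        -(Real.pi * Complex.I)] i)) = ![(-1 : ℂ), -1] := by
      funext i
      fin_cases i <;>
        simp [← Complex.exp_eq_exp_ℂ, Complex.exp_pi_mul_I, Complex.exp_neg,
          Complex.exp_pi_mul_I, inv_neg, inv_one]
    rw [this]
    ext i j
    fin_cases i <;> fin_cases j <;> simp [Matrix.diagonal, Matrix.one_apply]
  refine ⟨D, N, ?_, ?_, ?_⟩
  · simp [hD, Matrix.trace_diagonal, Fin.sum_univ_two]
  · simp [hN, Matrix.trace_sub, Matrix.trace_neg, Matrix.trace_one,
      Matrix.trace_fin_two, htr]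
  · rw [hexpD, hexpN, hN]
    noncomm_ring
end

section
/- Fix complex numbers a, b, c, d with ad - bc = 1, c ≠ 0, and D := (a+d)² - 4 ≠ 0. Fix a square root √D of D. Then the map (u,v,w) ↦ u + ((d-a+√D)/(2c))·v is a bijection from the set {(u,v,w) ∈ ℂ³ : (a-d)u + bv + cw = 0, u² + vw = -1} onto ℂ \ {0}. -/
theorem fiber_bijection (a b c d s : ℂ) (hdet : a * d - b * c = 1) (hc : c ≠ 0)
    (hD : (a + d) ^ 2 - 4 ≠ 0) (hs : s ^ 2 = (a + d) ^ 2 - 4) :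
    Set.BijOn (fun p : ℂ × ℂ × ℂ => p.1 + ((d - a + s) / (2 * c)) * p.2.1)
      {p : ℂ × ℂ × ℂ | (a - d) * p.1 + b * p.2.1 + c * p.2.2 = 0 ∧
        p.1 ^ 2 + p.2.1 * p.2.2 = -1}
      {z : ℂ | z ≠ 0} := by
  have hs0 : s ≠ 0 := by
    intro h; apply hD; rw [← hs, h]; ring
  have h2 : (2 : ℂ) ≠ 0 := two_ne_zero
  have h2c : (2 : ℂ) * c ≠ 0 := mul_ne_zero h2 hc
  -- key identity
  have key : ∀ u v w : ℂ, (a - d) * u + b * v + c * w = 0 →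
      u ^ 2 + v * w = -1 →
      (u + (d - a + s) / (2 * c) * v) * (c * u + (d - a - s) / 2 * v) = -c := by
    intro u v w h1 hq
    have k2 : (2 * c * u + (d - a + s) * v) * (2 * c * u + (d - a - s) * v)
        = -(4 * c ^ 2) := by
      linear_combination 4 * c ^ 2 * hq - 4 * c * v * h1 - v ^ 2 * hs - 4 * v ^ 2 * hdet
    have expand : (u + (d - a + s) / (2 * c) * v) * (c * u + (d - a - s) / 2 * v)
        = (2 * c * u + (d - a + s) * v) * (2 * c * u + (d - a - s) * v) / (4 * c) := by
      field_simp
      ring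
    rw [expand, k2]
    field_simp
  refine ⟨?_, ?_, ?_⟩
  · rintro ⟨u, v, w⟩ ⟨h1, hq⟩
    have k := key u v w h1 hq
    intro hz
    simp only at hz
    rw [hz, zero_mul] at k
    exact hc (neg_eq_zero.mp k.symm)
  · rintro ⟨u1, v1, w1⟩ ⟨h1, hq1⟩ ⟨u2, v2, w2⟩ ⟨h1', hq2⟩ heq
    simp only at heq
    have k1 := key u1 v1 w1 h1 hq1
    have k2 := key u2 v2 w2 h1' hq2
    have hz0 : u1 + (d - a + s) / (2 * c) * v1 ≠ 0 := by
      intro hz; rw [hz, zero_mul] at k1; exact hc (neg_eq_zero.mp k1.symm)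
    have keq : c * u1 + (d - a - s) / 2 * v1 = c * u2 + (d - a - s) / 2 * v2 := by
      have h := k1.trans k2.symm
      rw [heq] at h
      exact mul_left_cancel₀ (heq ▸ hz0) h
    have hmul : (d - a + s) / (2 * c) * (2 * c) = d - a + s :=
      div_mul_cancel₀ _ h2c
    have hv : v1 = v2 := by
      have h3 : 2 * s * v1 = 2 * s * v2 := by
        linear_combination (2 * c) * heq - 2 * keq - (v1 - v2) * hmul
      exact mul_left_cancel₀ (mul_ne_zero h2 hs0) h3
    have hu : u1 = u2 := by
      linear_combination heq - (d - a + s) / (2 * c) * hv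
    have hw : w1 = w2 := by
      have h4 : c * w1 = c * w2 := by
        rw [hv, hu] at h1
        linear_combination h1 - h1'
      exact mul_left_cancel₀ hc h4
    simp [hu, hv, hw]
  · rintro z hz
    simp only [Set.mem_setOf_eq] at hz
    set v : ℂ := c * (z + 1 / z) / s with hvdef
    set u : ℂ := z - (d - a + s) / (2 * c) * v with hudef
    refine ⟨(u, v, -((a - d) * u + b * v) / c), ⟨?_, ?_⟩, ?_⟩
    · simp only [Set.mem_setOf_eq]
      field_simp
      ring
    · simp only [Set.mem_setOf_eq]
      have hsv : s * v = c * (z + 1 / z) := by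
        rw [hvdef]; field_simp
      have e1 : 2 * c * u + (d - a + s) * v = 2 * c * z := by
        rw [hudef]; field_simp; ring
      have e2 : 2 * c * u + (d - a - s) * v = -(2 * c) / z := by
        have e2' : 2 * c * u + (d - a - s) * v = 2 * c * z - 2 * (s * v) := by
          linear_combination e1
        rw [e2', hsv]
        field_simp
        ring
      have prod : (2 * c * u + (d - a + s) * v) * (2 * c * u + (d - a - s) * v)
          = -(4 * c ^ 2) := by
        rw [e1, e2]
        field_simp
        ring
      have hcc : c * (v * (-((a - d) * u + b * v) / c))
          = -(v * ((a - d) * u + b * v)) := by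
        field_simp
      have goal4 : (4 * c) * (c * u ^ 2 - v * ((a - d) * u + b * v))
          = (4 * c) * (-c) := by
        linear_combination prod + v ^ 2 * hs + 4 * v ^ 2 * hdet
      have goal1 : c * u ^ 2 - v * ((a - d) * u + b * v) = -c :=
        mul_left_cancel₀ (mul_ne_zero (by norm_num) hc) goal4
      have goalc : c * (u ^ 2 + v * (-((a - d) * u + b * v) / c)) = c * (-1) := by
        calc c * (u ^ 2 + v * (-((a - d) * u + b * v) / c))
            = c * u ^ 2 + c * (v * (-((a - d) * u + b * v) / c)) := by ring
          _ = c * u ^ 2 - v * ((a - d) * u + b * v) := by rw [hcc]; ring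
          _ = c * (-1) := by rw [goal1]; ring
      exact mul_left_cancel₀ hc goalc
    · simp only
      rw [hudef]
      ring
end
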